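/- Suppose a differentiable function V₁ : [0,∞) → [0,∞) satisfies V₁'(t) ≤ −ψ √(2V₁(t)) (c − √(2V₁(t)))^{s} with c > √(2V₁(0)) > 0, ψ > 0, 0 < s < 1. Then V₁ reaches zero within time T₂ = (1/(ψ(1−s)))(c^{1−s} − (c − √(2V₁(0)))^{1−s}). -/

import Mathlib

theorem finite_time_convergence_below (V₁ : ℝ → ℝ) (ψ c s : ℝ)
    (hψ : 0 < ψ) (hs0 : 0 < s) (hs1 : s < 1)
    (hV0 : 0 < Real.sqrt (2 * V₁ 0)) (hc : Real.sqrt (2 * V₁ 0) < c)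
    (hdiff : Differentiable ℝ V₁) (hnonneg : ∀ t, 0 ≤ V₁ t)
    (hineq : ∀ t, 0 ≤ t →
      deriv V₁ t ≤ -ψ * Real.sqrt (2 * V₁ t) * (c - Real.sqrt (2 * V₁ t)) ^ s) :
    ∃ t, 0 ≤ t ∧
      t ≤ (1 / (ψ * (1 - s))) *
        (c ^ (1 - s) - (c - Real.sqrt (2 * V₁ 0)) ^ (1 - s)) ∧
      V₁ t = 0 := by
  set f : ℝ → ℝ := fun t => Real.sqrt (2 * V₁ t) with hfdef
  set T : ℝ := (1 / (ψ * (1 - s))) * (c ^ (1 - s) - (c - f 0) ^ (1 - s)) with hTdef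
  have hs1' : (0:ℝ) < 1 - s := by linarith
  have hψs : 0 < ψ * (1 - s) := mul_pos hψ hs1'
  have hc0 : 0 < c := lt_trans hV0 hc
  have hcf0 : 0 < c - f 0 := sub_pos.2 hc
  have hrlt : (c - f 0) ^ (1 - s) < c ^ (1 - s) :=
    Real.rpow_lt_rpow hcf0.le (by linarith) hs1'
  have hTpos : 0 < T := by
    rw [hTdef]
    exact mul_pos (by positivity) (sub_pos.2 hrlt)
  by_contra hcon
  push_neg at hcon
  have hpos : ∀ t, 0 ≤ t → t ≤ T → 0 < V₁ t := fun t h1 h2 =>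
    (hnonneg t).lt_of_ne (Ne.symm (hcon t h1 h2))
  have hfpos : ∀ t, 0 ≤ t → t ≤ T → 0 < f t := fun t h1 h2 =>
    Real.sqrt_pos.2 (by linarith [hpos t h1 h2])
  have hfcont : Continuous f := (continuous_const.mul hdiff.continuous).sqrt
  -- Step 1: f t < c on [0,T]
  have hflt : ∀ t, 0 ≤ t → t ≤ T → f t < c := by
    by_contra h
    push_neg at h
    obtain ⟨t₀, ht₀0, ht₀T, ht₀c⟩ := h
    set B : Set ℝ := Set.Icc 0 T ∩ {t | c ≤ f t} with hBdef
    have hBne : B.Nonempty := ⟨t₀, ⟨ht₀0, ht₀T⟩, ht₀c⟩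
    have hBbd : BddBelow B := ⟨0, fun x hx => hx.1.1⟩
    have hBclosed : IsClosed B :=
      isClosed_Icc.inter (isClosed_le continuous_const hfcont)
    have ht₁mem : sInf B ∈ B := hBclosed.csInf_mem hBne hBbd
    set t₁ := sInf B with ht₁def
    have ht₁0 : 0 ≤ t₁ := ht₁mem.1.1
    have ht₁T : t₁ ≤ T := ht₁mem.1.2
    have ht₁c : c ≤ f t₁ := ht₁mem.2
    -- V₁ is antitone on [0, t₁]
    have hanti : AntitoneOn V₁ (Set.Icc 0 t₁) := by
      apply antitoneOn_of_deriv_nonpos (convex_Icc 0 t₁) hdiff.continuous.continuousOn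
        (hdiff.differentiableOn.mono interior_subset)
      intro u hu
      rw [interior_Icc] at hu
      have hu0 : 0 ≤ u := hu.1.le
      have huT : u ≤ T := le_trans hu.2.le ht₁T
      have hunB : u ∉ B := fun hmem => absurd (csInf_le hBbd hmem) (not_le.2 hu.2)
      have hufc : f u < c := by
        by_contra h'
        exact hunB ⟨⟨hu0, huT⟩, not_lt.1 h'⟩
      have h1 := hineq u hu0
      have h2 : 0 < ψ * f u * (c - f u) ^ s :=
        mul_pos (mul_pos hψ (hfpos u hu0 huT)) (Real.rpow_pos_of_pos (by linarith) s)
      nlinarith [h1]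
    have : f t₁ ≤ f 0 := by
      have := hanti (Set.left_mem_Icc.2 ht₁0) (Set.right_mem_Icc.2 ht₁0) ht₁0
      exact Real.sqrt_le_sqrt (by linarith)
    linarith
  -- Step 2: the comparison function g
  set g : ℝ → ℝ := fun t => (c - f t) ^ (1 - s) - ψ * (1 - s) * t with hgdef
  have hgderiv : ∀ u, 0 ≤ u → u ≤ T →
      HasDerivAt g ((-(deriv V₁ u / f u)) * (1 - s) * (c - f u) ^ (1 - s - 1) - ψ * (1 - s)) u := by
    intro u hu0 huT
    have hV : HasDerivAt V₁ (deriv V₁ u) u := (hdiff u).hasDerivAt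
    have h2V : HasDerivAt (fun t => 2 * V₁ t) (2 * deriv V₁ u) u := hV.const_mul 2
    have h2Vne : (2 * V₁ u) ≠ 0 := by have := hpos u hu0 huT; positivity
    have hsq : HasDerivAt (fun t => Real.sqrt (2 * V₁ t))
        (2 * deriv V₁ u / (2 * Real.sqrt (2 * V₁ u))) u := h2V.sqrt h2Vne
    have hfu : 0 < f u := hfpos u hu0 huT
    have hsq' : HasDerivAt f (deriv V₁ u / f u) u := by
      convert hsq using 1
      rw [hfdef]
      field_simp
    have hsub : HasDerivAt (fun t => c - f t) (-(deriv V₁ u / f u)) u :=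
      by have := (hasDerivAt_const u c).sub hsq'; rw [zero_sub] at this; exact this
    have hbne : c - f u ≠ 0 := by have := hflt u hu0 huT; intro h; linarith [sub_eq_zero.1 h]
    have hrp := hsub.rpow_const (p := 1 - s) (Or.inl hbne)
    have hlin : HasDerivAt (fun t : ℝ => ψ * (1 - s) * t) (ψ * (1 - s)) u := by
      simpa using (hasDerivAt_id u).const_mul (ψ * (1 - s))
    exact hrp.sub hlin
  have hgmono : MonotoneOn g (Set.Icc 0 T) := by
    apply monotoneOn_of_deriv_nonneg (convex_Icc 0 T)
    · intro u hu
      exact ((hgderiv u hu.1 hu.2).differentiableAt).continuousAt.continuousWithinAt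
    · intro u hu
      rw [interior_Icc] at hu
      exact ((hgderiv u hu.1.le hu.2.le).differentiableAt).differentiableWithinAt
    · intro u hu
      rw [interior_Icc] at hu
      have hu0 : 0 ≤ u := hu.1.le
      have huT : u ≤ T := hu.2.le
      rw [(hgderiv u hu0 huT).deriv]
      have hfu : 0 < f u := hfpos u hu0 huT
      have hcfu : 0 < c - f u := sub_pos.2 (hflt u hu0 huT)
      have h1 := hineq u hu0
      -- deriv V₁ u / f u ≤ -ψ * (c - f u)^s
      have h2 : deriv V₁ u / f u ≤ -ψ * (c - f u) ^ s := by
        rw [div_le_iff₀ hfu]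
        nlinarith [h1]
      have h3 : ψ * (c - f u) ^ s ≤ -(deriv V₁ u / f u) := by linarith
      have h4 : (0:ℝ) < (c - f u) ^ (1 - s - 1) := Real.rpow_pos_of_pos hcfu _
      have h5 : (c - f u) ^ s * (c - f u) ^ (1 - s - 1) = 1 := by
        rw [← Real.rpow_add hcfu]
        norm_num
      have h6 : ψ * (c - f u) ^ s * ((1 - s) * (c - f u) ^ (1 - s - 1))
          ≤ -(deriv V₁ u / f u) * ((1 - s) * (c - f u) ^ (1 - s - 1)) := by
        apply mul_le_mul_of_nonneg_right h3
        positivity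
      have h7 : ψ * (c - f u) ^ s * ((1 - s) * (c - f u) ^ (1 - s - 1)) = ψ * (1 - s) := by
        calc ψ * (c - f u) ^ s * ((1 - s) * (c - f u) ^ (1 - s - 1))
            = ψ * (1 - s) * ((c - f u) ^ s * (c - f u) ^ (1 - s - 1)) := by ring
          _ = ψ * (1 - s) := by rw [h5]; ring
      nlinarith [h6, h7]
  have hkey := hgmono (Set.left_mem_Icc.2 hTpos.le) (Set.right_mem_Icc.2 hTpos.le) hTpos.le
  have hψT : ψ * (1 - s) * T = c ^ (1 - s) - (c - f 0) ^ (1 - s) := by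
    rw [hTdef]; field_simp
  have hfT : 0 < f T := hfpos T hTpos.le le_rfl
  have hlt : (c - f T) ^ (1 - s) < c ^ (1 - s) :=
    Real.rpow_lt_rpow (sub_nonneg.2 (hflt T hTpos.le le_rfl).le) (by linarith) hs1'
  simp only [hgdef] at hkey
  nlinarith [hkey, hψT, hlt]
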